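/- arXiv:1601.01374 — 3 statements merged into one kernel-verified Lean document; each statement's English description precedes it below -/
import Mathlib

section
/- For a single nonnegative real ω ≥ 0, ∫₀^∞ t^(−3/2) (1 − e^(−ω² t)) dt = 2√π · ω. -/
open MeasureTheory Real Set Filter Topology

-- integrability of the main integrand
lemma integrand_integrable {a : ℝ} (ha : 0 < a) :
    IntegrableOn (fun t : ℝ => t ^ (-(3/2) : ℝ) * (1 - Real.exp (-a * t))) (Ioi 0) := by
  have hmeas : AEStronglyMeasurable (fun t : ℝ => t ^ (-(3/2) : ℝ) * (1 - Real.exp (-a * t)))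
      (volume.restrict (Ioi 0)) := by
    apply ContinuousOn.aestronglyMeasurable _ measurableSet_Ioi
    exact (ContinuousOn.rpow_const continuousOn_id (fun x hx => Or.inl (ne_of_gt hx))).mul
      (continuousOn_const.sub ((continuous_exp.comp (continuous_const.mul continuous_id)).continuousOn))
  rw [← Ioc_union_Ioi_eq_Ioi (zero_le_one (α := ℝ)), integrableOn_union]
  constructor
  · -- on (0,1], bound by a * t^(-1/2)
    have hint : IntegrableOn (fun t : ℝ => a * t ^ (-(1/2) : ℝ)) (Ioc 0 1) := by
      apply Integrable.const_mul
      have := (intervalIntegral.intervalIntegrable_rpow' (a := 0) (b := 1)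
        (r := -(1/2)) (by norm_num)).1
      exact this
    refine Integrable.mono hint (hmeas.mono_set (Ioc_subset_Ioi_self)) ?_
    filter_upwards [ae_restrict_mem measurableSet_Ioc] with t ht
    have ht0 : 0 < t := ht.1
    have h1 : 0 ≤ 1 - Real.exp (-a * t) := by
      have : Real.exp (-a * t) ≤ 1 := by
        rw [Real.exp_le_one_iff]; nlinarith
      linarith
    have h2 : 1 - Real.exp (-a * t) ≤ a * t := by
      nlinarith [Real.add_one_le_exp (-a * t)]
    rw [Real.norm_eq_abs, Real.norm_eq_abs,
      abs_of_nonneg (mul_nonneg (by positivity) h1), abs_of_nonneg (by positivity)]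
    calc t ^ (-(3/2) : ℝ) * (1 - Real.exp (-a * t)) ≤ t ^ (-(3/2) : ℝ) * (a * t) := by
          apply mul_le_mul_of_nonneg_left h2 (by positivity)
      _ = a * (t ^ (-(3/2) : ℝ) * t ^ (1:ℝ)) := by rw [Real.rpow_one]; ring
      _ = a * t ^ (-(1/2) : ℝ) := by rw [← Real.rpow_add ht0]; norm_num
  · -- on (1,∞), bound by t^(-3/2)
    have hint : IntegrableOn (fun t : ℝ => t ^ (-(3/2) : ℝ)) (Ioi 1) :=
      integrableOn_Ioi_rpow_of_lt (by norm_num) one_pos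
    refine Integrable.mono hint (hmeas.mono_set (Ioi_subset_Ioi zero_le_one)) ?_
    filter_upwards [ae_restrict_mem measurableSet_Ioi] with t ht
    have ht0 : (0:ℝ) < t := lt_trans one_pos ht
    have h1 : 0 ≤ 1 - Real.exp (-a * t) := by
      have : Real.exp (-a * t) ≤ 1 := by rw [Real.exp_le_one_iff]; nlinarith
      linarith
    have h2 : 1 - Real.exp (-a * t) ≤ 1 := by
      have := Real.exp_pos (-a * t); linarith
    rw [Real.norm_eq_abs, Real.norm_eq_abs,
      abs_of_nonneg (mul_nonneg (by positivity) h1), abs_of_nonneg (by positivity)]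
    nlinarith [Real.rpow_pos_of_pos ht0 (-(3/2):ℝ)]

theorem gaussian_frequency_integral (ω : ℝ) (hω : 0 ≤ ω) :
    ∫ t in Set.Ioi (0 : ℝ), t ^ (-(3/2) : ℝ) * (1 - Real.exp (-ω ^ 2 * t))
      = 2 * Real.sqrt π * ω := by
  rcases eq_or_lt_of_le hω with h0 | h0
  · simp [← h0]
  set a : ℝ := ω ^ 2 with ha_def
  have ha : 0 < a := by positivity
  -- the antiderivative
  set f : ℝ → ℝ := fun t => -2 * t ^ (-(1/2) : ℝ) * (1 - Real.exp (-a * t)) with hf_def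
  set f' : ℝ → ℝ := fun t => t ^ (-(3/2) : ℝ) * (1 - Real.exp (-a * t))
      - 2 * a * (t ^ (-(1/2) : ℝ) * Real.exp (-a * t)) with hf'_def
  have hderiv : ∀ t ∈ Ioi (0:ℝ), HasDerivAt f (f' t) t := by
    intro t ht
    have ht0 : 0 < t := ht
    have h1 : HasDerivAt (fun t : ℝ => t ^ (-(1/2) : ℝ)) (-(1/2) * t ^ ((-(1/2):ℝ) - 1)) t :=
      Real.hasDerivAt_rpow_const (Or.inl ht0.ne')
    have h2 : HasDerivAt (fun t : ℝ => 1 - Real.exp (-a * t)) (a * Real.exp (-a * t)) t := by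
      have : HasDerivAt (fun t : ℝ => -a * t) (-a) t := by
        simpa using (hasDerivAt_id t).const_mul (-a)
      have := (this.exp).const_sub 1
      exact this.congr_deriv (by ring)
    have := ((h1.const_mul (-2)).mul h2)
    refine this.congr_deriv ?_
    have he : ((-(1/2):ℝ) - 1) = (-(3/2):ℝ) := by norm_num
    rw [hf'_def]
    simp only [he]
    ring
  have hcont : ContinuousWithinAt f (Ici (0:ℝ)) 0 := by
    have hb : Tendsto (fun t : ℝ => 4 * a * t ^ ((1:ℝ)/2)) (nhdsWithin 0 (Ici (0:ℝ))) (𝓝 0) := by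
      have : Tendsto (fun t : ℝ => t ^ ((1:ℝ)/2)) (𝓝 0) (𝓝 ((0:ℝ) ^ ((1:ℝ)/2))) :=
        (Real.continuousAt_rpow_const 0 ((1:ℝ)/2) (Or.inr (by norm_num))).tendsto
      rw [Real.zero_rpow (by norm_num : ((1:ℝ)/2) ≠ 0)] at this
      have := (this.const_mul (4 * a)).mono_left (nhdsWithin_le_nhds (s := Ici (0:ℝ)))
      simpa using this
    have : Tendsto f (nhdsWithin 0 (Ici (0:ℝ))) (𝓝 0) := by
      apply squeeze_zero_norm' _ hb
      filter_upwards [self_mem_nhdsWithin] with t (ht : 0 ≤ t)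
      rcases eq_or_lt_of_le ht with rfl | ht0
      · simp [hf_def, Real.zero_rpow (by norm_num : (-(1/2):ℝ) ≠ 0)]
      have h1 : 0 ≤ 1 - Real.exp (-a * t) := by
        have : Real.exp (-a * t) ≤ 1 := by rw [Real.exp_le_one_iff]; nlinarith
        linarith
      have h2 : 1 - Real.exp (-a * t) ≤ a * t := by
        nlinarith [Real.add_one_le_exp (-a * t)]
      have hpos : (0:ℝ) < t ^ (-(1/2):ℝ) := Real.rpow_pos_of_pos ht0 _
      rw [hf_def]
      simp only [Real.norm_eq_abs]
      rw [abs_of_nonpos (by nlinarith)]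
      have hkey : t ^ (-(1/2):ℝ) * (a * t) = a * t ^ ((1:ℝ)/2) := by
        rw [show a * t = a * t ^ (1:ℝ) by rw [Real.rpow_one], ← mul_assoc,
          mul_comm (t ^ (-(1/2):ℝ)) a, mul_assoc, ← Real.rpow_add ht0]
        norm_num
      nlinarith [mul_le_mul_of_nonneg_left h2 hpos.le]
    have hf0 : f 0 = 0 := by
      simp [hf_def, Real.zero_rpow (by norm_num : (-(1/2):ℝ) ≠ 0)]
    rw [ContinuousWithinAt, hf0]
    exact this
  have hint2 : IntegrableOn (fun t : ℝ => t ^ (-(1/2) : ℝ) * Real.exp (-a * t)) (Ioi 0) := by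
    have := integrableOn_rpow_mul_exp_neg_mul_rpow (p := 1) (s := -(1/2)) (b := a)
      (by norm_num) one_pos ha
    refine this.congr_fun (fun t ht => ?_) measurableSet_Ioi
    simp only [Real.rpow_one]
  have hf'int : IntegrableOn f' (Ioi 0) :=
    (integrand_integrable ha).sub (hint2.const_mul (2 * a))
  have htop : Tendsto f atTop (𝓝 0) := by
    have hb : Tendsto (fun t : ℝ => 2 * t ^ (-(1/2):ℝ)) atTop (𝓝 0) := by
      have := (tendsto_rpow_neg_atTop (by norm_num : (0:ℝ) < 1/2)).const_mul 2
      simpa using this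
    apply squeeze_zero_norm' _ hb
    filter_upwards [eventually_gt_atTop 0] with t ht0
    have h1 : 0 ≤ 1 - Real.exp (-a * t) := by
      have : Real.exp (-a * t) ≤ 1 := by rw [Real.exp_le_one_iff]; nlinarith
      linarith
    have h2 : 1 - Real.exp (-a * t) ≤ 1 := by
      have := Real.exp_pos (-a * t); linarith
    have hpos : (0:ℝ) < t ^ (-(1/2):ℝ) := Real.rpow_pos_of_pos ht0 _
    rw [hf_def]
    simp only [Real.norm_eq_abs]
    rw [abs_of_nonpos (by nlinarith)]
    nlinarith
  have key := integral_Ioi_of_hasDerivAt_of_tendsto hcont hderiv hf'int htop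
  have hf0 : f 0 = 0 := by
    simp [hf_def, Real.zero_rpow (by norm_num : (-(1/2):ℝ) ≠ 0)]
  rw [hf0, sub_zero] at key
  -- key : ∫ f' = 0
  have hsplit : ∫ t in Ioi (0:ℝ), f' t =
      (∫ t in Ioi (0:ℝ), t ^ (-(3/2) : ℝ) * (1 - Real.exp (-a * t)))
      - 2 * a * ∫ t in Ioi (0:ℝ), t ^ (-(1/2) : ℝ) * Real.exp (-a * t) := by
    rw [integral_sub (integrand_integrable ha) (hint2.const_mul (2*a)), integral_const_mul]
  have hGamma : ∫ t in Ioi (0:ℝ), t ^ (-(1/2) : ℝ) * Real.exp (-a * t)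
      = (1 / a) ^ ((1:ℝ)/2) * Real.Gamma (1/2) := by
    have := integral_rpow_mul_exp_neg_mul_Ioi (a := (1:ℝ)/2) (r := a) (by norm_num) ha
    rw [← this]
    refine setIntegral_congr_fun measurableSet_Ioi (fun t ht => ?_)
    norm_num
  rw [key, hGamma, Real.Gamma_one_half_eq] at hsplit
  have hsq : Real.sqrt a = ω := by
    rw [ha_def, Real.sqrt_sq hω]
  have h1a : (1 / a) ^ ((1:ℝ)/2) = 1 / Real.sqrt a := by
    rw [← Real.sqrt_eq_rpow, one_div, Real.sqrt_inv, one_div]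
  rw [h1a, hsq] at hsplit
  have hω0 : ω ≠ 0 := ne_of_gt h0
  have hI : (∫ t in Set.Ioi (0:ℝ), t ^ (-(3/2):ℝ) * (1 - Real.exp (-a * t)))
      = 2 * a * (1 / ω * Real.sqrt π) := by linarith
  rw [hI, ha_def]
  field_simp
end

section
/- For all ω > 0 and Ω > 0, ω · erfc(ω/Ω) = (Ω/√π) e^(−ω²/Ω²) − (1/√(4π)) ∫_{Ω^{−2}}^∞ t^(−3/2) e^(−ω² t) dt. -/
open MeasureTheory Real Set Filter

set_option maxHeartbeats 1000000

/-- The tail Gaussian integral. -/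
noncomputable def gtail (x : ℝ) : ℝ := ∫ s in Set.Ioi x, Real.exp (-s ^ 2)

lemma gauss_integrable : MeasureTheory.Integrable (fun s : ℝ => Real.exp (-s ^ 2)) := by
  have := integrable_exp_neg_mul_sq (b := 1) one_pos
  simpa using this

lemma gtail_eq (x : ℝ) :
    gtail x = ((∫ s : ℝ, Real.exp (-s ^ 2)) - ∫ s in Set.Iic (0:ℝ), Real.exp (-s ^ 2))
      - ∫ s in (0:ℝ)..x, Real.exp (-s ^ 2) := by
  have hint := gauss_integrable
  have h1 : ∫ s in (0:ℝ)..x, Real.exp (-s ^ 2)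
      = (∫ s in Set.Iic x, Real.exp (-s ^ 2)) - ∫ s in Set.Iic (0:ℝ), Real.exp (-s ^ 2) :=
    (intervalIntegral.integral_Iic_sub_Iic hint.integrableOn hint.integrableOn).symm
  have h2 : (∫ s in Set.Iic x, Real.exp (-s ^ 2)) + gtail x
      = ∫ s : ℝ, Real.exp (-s ^ 2) :=
    intervalIntegral.integral_Iic_add_Ioi hint.integrableOn hint.integrableOn
  rw [h1]; linarith

lemma gtail_hasDerivAt (x : ℝ) : HasDerivAt gtail (-Real.exp (-x ^ 2)) x := by
  have hcont : Continuous fun s : ℝ => Real.exp (-s ^ 2) := by continuity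
  have hd : HasDerivAt (fun u => ∫ s in (0:ℝ)..u, Real.exp (-s ^ 2))
      (Real.exp (-x ^ 2)) x :=
    intervalIntegral.integral_hasDerivAt_right gauss_integrable.intervalIntegrable
      (hcont.stronglyMeasurable.stronglyMeasurableAtFilter) hcont.continuousAt
  have := (hasDerivAt_const x (((∫ s : ℝ, Real.exp (-s ^ 2))
      - ∫ s in Set.Iic (0:ℝ), Real.exp (-s ^ 2)))).sub hd
  simp only [zero_sub] at this
  exact this.congr_of_eventuallyEq (Filter.Eventually.of_forall fun y => gtail_eq y)

lemma gtail_tendsto_zero : Tendsto gtail atTop (nhds 0) := by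
  have h := intervalIntegral_tendsto_integral_Ioi (μ := volume) (b := fun x : ℝ => x)
    (l := atTop) 0 gauss_integrable.integrableOn tendsto_id
  have hc : Tendsto (fun x : ℝ => ((∫ s : ℝ, Real.exp (-s ^ 2))
      - ∫ s in Set.Iic (0:ℝ), Real.exp (-s ^ 2)) - ∫ s in (0:ℝ)..x, Real.exp (-s ^ 2))
      atTop (nhds (((∫ s : ℝ, Real.exp (-s ^ 2)) - ∫ s in Set.Iic (0:ℝ), Real.exp (-s ^ 2))
        - ∫ s in Set.Ioi (0:ℝ), Real.exp (-s ^ 2))) := (tendsto_const_nhds.sub h)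
  have hval : ((∫ s : ℝ, Real.exp (-s ^ 2)) - ∫ s in Set.Iic (0:ℝ), Real.exp (-s ^ 2))
      - ∫ s in Set.Ioi (0:ℝ), Real.exp (-s ^ 2) = 0 := by
    have h2 : (∫ s in Set.Iic (0:ℝ), Real.exp (-s ^ 2)) + ∫ s in Set.Ioi (0:ℝ), Real.exp (-s ^ 2)
        = ∫ s : ℝ, Real.exp (-s ^ 2) :=
      intervalIntegral.integral_Iic_add_Ioi gauss_integrable.integrableOn gauss_integrable.integrableOn
    linarith
  rw [hval] at hc
  exact hc.congr fun x => (gtail_eq x).symm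

lemma key_integral (a c : ℝ) (ha : 0 < a) (hc : 0 < c) :
    ∫ t in Set.Ioi c, t ^ (-(3/2) : ℝ) * Real.exp (-a ^ 2 * t)
      = 2 * c ^ (-(1/2) : ℝ) * Real.exp (-a ^ 2 * c) - 4 * a * gtail (a * c ^ ((1/2) : ℝ)) := by
  set F : ℝ → ℝ := fun t => -2 * t ^ (-(1/2) : ℝ) * Real.exp (-a ^ 2 * t)
      + 4 * a * gtail (a * t ^ ((1/2) : ℝ)) with hF
  have hderiv : ∀ t ∈ Set.Ici c, HasDerivAt F (t ^ (-(3/2) : ℝ) * Real.exp (-a ^ 2 * t)) t := by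
    intro t ht
    have htpos : 0 < t := lt_of_lt_of_le hc ht
    have htne : t ≠ 0 := ne_of_gt htpos
    have h1 : HasDerivAt (fun t : ℝ => t ^ (-(1/2) : ℝ))
        (-(1/2) * t ^ (-(3/2) : ℝ)) t := by
      have := Real.hasDerivAt_rpow_const (x := t) (p := (-(1/2) : ℝ)) (Or.inl htne)
      have h' : (-(1/2) : ℝ) - 1 = -(3/2) := by norm_num
      rwa [h'] at this
    have h2 : HasDerivAt (fun t : ℝ => Real.exp (-a ^ 2 * t))
        (-a ^ 2 * Real.exp (-a ^ 2 * t)) t := by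
      have := ((hasDerivAt_id t).const_mul (-a ^ 2)).exp
      simpa [mul_comm] using this
    have h3 : HasDerivAt (fun t : ℝ => a * t ^ ((1/2) : ℝ))
        (a * ((1/2) * t ^ (-(1/2) : ℝ))) t := by
      have := Real.hasDerivAt_rpow_const (x := t) (p := ((1/2) : ℝ)) (Or.inl htne)
      have h' : ((1:ℝ)/2 - 1) = -(1/2) := by norm_num
      rw [h'] at this
      exact this.const_mul a
    have h4 : HasDerivAt (fun t : ℝ => gtail (a * t ^ ((1/2) : ℝ)))
        (-Real.exp (-(a * t ^ ((1/2) : ℝ)) ^ 2) * (a * ((1/2) * t ^ (-(1/2) : ℝ)))) t :=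
      (gtail_hasDerivAt _).comp t h3
    have hsq : (a * t ^ ((1/2) : ℝ)) ^ 2 = a ^ 2 * t := by
      rw [mul_pow, ← Real.rpow_natCast (t ^ ((1/2):ℝ)) 2, ← Real.rpow_mul htpos.le]
      norm_num
    rw [hsq] at h4
    have := ((h1.const_mul (-2)).mul h2).add ((h4.const_mul (4 * a)))
    convert this using 1
    · rfl
    · rfl
    · rfl
    simp only [neg_mul]
    ring
  have ha2 : (0:ℝ) < a ^ 2 := by positivity
  have hint : IntegrableOn (fun t => t ^ (-(3/2) : ℝ) * Real.exp (-a ^ 2 * t)) (Set.Ioi c) := by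
    have hbig : IntegrableOn (fun t => c ^ (-(3/2) : ℝ) * Real.exp (-a ^ 2 * t)) (Set.Ioi c) := by
      have := (exp_neg_integrableOn_Ioi c ha2).const_mul (c ^ (-(3/2) : ℝ))
      simpa [neg_mul, IntegrableOn] using this
    refine hbig.mono' ?_ ?_
    · apply ContinuousOn.aestronglyMeasurable ?_ measurableSet_Ioi
      apply ContinuousOn.mul
      · exact fun t ht => (Real.continuousAt_rpow_const t _
          (Or.inl (ne_of_gt (lt_trans hc ht)))).continuousWithinAt
      · exact (Real.continuous_exp.comp (continuous_const.mul continuous_id)).continuousOn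
    · filter_upwards [ae_restrict_mem measurableSet_Ioi] with t ht
      have htpos : 0 < t := lt_trans hc ht
      rw [Real.norm_eq_abs, abs_of_nonneg (by positivity)]
      apply mul_le_mul_of_nonneg_right _ (Real.exp_nonneg _)
      exact Real.rpow_le_rpow_of_nonpos hc (le_of_lt ht) (by norm_num)
  have htends : Tendsto F atTop (nhds 0) := by
    have t1 : Tendsto (fun t : ℝ => -2 * t ^ (-(1/2) : ℝ) * Real.exp (-a ^ 2 * t))
        atTop (nhds 0) := by
      have hr : Tendsto (fun t : ℝ => t ^ (-(1/2) : ℝ)) atTop (nhds 0) :=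
        tendsto_rpow_neg_atTop (by norm_num)
      have he : Tendsto (fun t : ℝ => Real.exp (-a ^ 2 * t)) atTop (nhds 0) := by
        apply Real.tendsto_exp_atBot.comp
        exact Tendsto.const_mul_atTop_of_neg (neg_neg_iff_pos.mpr ha2) tendsto_id |>.congr
          (fun x => rfl)
      have h := ((hr.const_mul (-2)).mul he)
      have h0 : (-2:ℝ) * 0 * 0 = 0 := by norm_num
      rwa [h0] at h
    have t2 : Tendsto (fun t : ℝ => 4 * a * gtail (a * t ^ ((1/2) : ℝ))) atTop (nhds 0) := by
      have harg : Tendsto (fun t : ℝ => a * t ^ ((1/2) : ℝ)) atTop atTop :=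
        (tendsto_rpow_atTop (by norm_num)).const_mul_atTop ha
      have h := (gtail_tendsto_zero.comp harg).const_mul (4 * a)
      rwa [mul_zero] at h
    have h := t1.add t2
    rw [add_zero] at h
    exact h
  have hmain := integral_Ioi_of_hasDerivAt_of_tendsto' hderiv hint htends
  rw [hmain, hF]
  simp only [zero_sub]
  ring

/-- The complementary error function `erfc x = (2/√π) ∫_x^∞ e^{-t²} dt`. -/
noncomputable def erfc (x : ℝ) : ℝ :=
  (2 / Real.sqrt π) * ∫ t in Set.Ioi x, Real.exp (-t ^ 2)

theorem erfc_regularized_single_mode (ω Ω : ℝ) (hω : 0 < ω) (hΩ : 0 < Ω) :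
    ω * erfc (ω / Ω)
      = (Ω / Real.sqrt π) * Real.exp (-ω ^ 2 / Ω ^ 2)
        - (1 / Real.sqrt (4 * π)) *
            ∫ t in Set.Ioi ((Ω ^ 2)⁻¹), t ^ (-(3/2) : ℝ) * Real.exp (-ω ^ 2 * t) := by
  have hc : (0:ℝ) < (Ω ^ 2)⁻¹ := by positivity
  have hkey := key_integral ω ((Ω ^ 2)⁻¹) hω hc
  have h1 : ((Ω ^ 2)⁻¹ : ℝ) ^ (-(1/2) : ℝ) = Ω := by
    rw [← Real.rpow_natCast Ω 2, ← Real.rpow_neg_one, ← Real.rpow_mul (by positivity),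
      ← Real.rpow_mul hΩ.le]
    norm_num
  have h2 : ((Ω ^ 2)⁻¹ : ℝ) ^ ((1/2) : ℝ) = Ω⁻¹ := by
    rw [← Real.rpow_natCast Ω 2, ← Real.rpow_neg_one, ← Real.rpow_mul (by positivity),
      ← Real.rpow_mul hΩ.le]
    norm_num
    rw [Real.rpow_neg_one]
  have h3 : -ω ^ 2 * (Ω ^ 2)⁻¹ = -ω ^ 2 / Ω ^ 2 := by ring
  rw [h1, h2, h3] at hkey
  have h4 : ω * ((Ω ^ 2)⁻¹ : ℝ) ^ ((1/2) : ℝ) = ω / Ω := by rw [h2]; ring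
  rw [hkey]
  have hg : erfc (ω / Ω) = (2 / Real.sqrt π) * gtail (ω / Ω) := rfl
  have h5 : ω * Ω⁻¹ = ω / Ω := by ring
  rw [hg, h5]
  have hsπ : Real.sqrt (4 * π) = 2 * Real.sqrt π := by
    rw [show (4:ℝ) * π = 2 ^ 2 * π by ring, Real.sqrt_mul (by positivity),
      Real.sqrt_sq (by norm_num)]
  rw [hsπ]
  have hπ : Real.sqrt π ≠ 0 := by positivity
  field_simp
  ring
end

section
/- Post's inversion formula: let g : (0,∞) → ℝ be continuous and bounded, and let G(s) = ∫₀^∞ e^{−st} g(t) dt be its Laplace transform. Then for every z > 0, g(z) = lim_{n→∞} ((−1)^n / n!) (n/z)^{n+1} G^{(n)}(n/z), where G^{(n)} denotes the n-th derivative of G. -/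
open MeasureTheory Real Set Filter

lemma aux_int_pow_exp (n : ℕ) {s : ℝ} (hs : 0 < s) :
    IntegrableOn (fun t : ℝ => t ^ n * Real.exp (-(s * t))) (Set.Ioi 0) := by
  have h := integrableOn_rpow_mul_exp_neg_mul_rpow (p := 1) (s := (n : ℝ)) (b := s)
    (neg_one_lt_zero.trans_le (Nat.cast_nonneg n)) zero_lt_one hs
  refine h.congr_fun (fun x hx => ?_) measurableSet_Ioi
  dsimp only
  rw [Real.rpow_natCast, Real.rpow_one, neg_mul]

lemma aux_integral_pow_exp (n : ℕ) {s : ℝ} (hs : 0 < s) :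
    ∫ t in Set.Ioi (0:ℝ), t ^ n * Real.exp (-(s * t)) = (n.factorial : ℝ) / s ^ (n + 1) := by
  have h := Real.integral_rpow_mul_exp_neg_mul_Ioi (a := (n : ℝ) + 1) (r := s)
    (by positivity) hs
  rw [show ((n : ℝ) + 1) - 1 = (n : ℝ) by ring] at h
  rw [show (∫ t in Set.Ioi (0:ℝ), t ^ n * Real.exp (-(s * t)))
      = ∫ t in Set.Ioi (0:ℝ), t ^ ((n : ℝ)) * Real.exp (-(s * t)) from
    setIntegral_congr_fun measurableSet_Ioi (fun x hx => by rw [Real.rpow_natCast]), h,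
    Real.Gamma_nat_eq_factorial,
    show ((n : ℝ) + 1) = ((n + 1 : ℕ) : ℝ) by push_cast; ring, Real.rpow_natCast]
  rw [div_pow, one_pow]
  ring

variable {g : ℝ → ℝ} {M : ℝ}

lemma aux_meas_K (hg_cont : ContinuousOn g (Set.Ioi 0)) (n : ℕ) (s : ℝ) :
    AEStronglyMeasurable (fun t : ℝ => t ^ n * Real.exp (-(s * t)) * g t)
      (volume.restrict (Set.Ioi 0)) := by
  have hc : ContinuousOn (fun t : ℝ => t ^ n * Real.exp (-(s * t)) * g t) (Set.Ioi 0) := by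
    exact (((continuous_pow n).continuousOn).mul
      ((Real.continuous_exp.comp (continuous_const.mul continuous_id).neg).continuousOn)).mul hg_cont
  exact hc.aestronglyMeasurable measurableSet_Ioi

lemma aux_int_K (hg_cont : ContinuousOn g (Set.Ioi 0))
    (hM : ∀ t : ℝ, 0 < t → |g t| ≤ M) (n : ℕ) {s : ℝ} (hs : 0 < s) :
    IntegrableOn (fun t : ℝ => t ^ n * Real.exp (-(s * t)) * g t) (Set.Ioi 0) := by
  refine Integrable.mono' (((aux_int_pow_exp n hs).const_mul M)) (aux_meas_K hg_cont n s) ?_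
  rw [ae_restrict_iff' measurableSet_Ioi]
  filter_upwards with t ht
  rw [Set.mem_Ioi] at ht
  have h1 : 0 < t ^ n * Real.exp (-(s * t)) := by positivity
  rw [Real.norm_eq_abs, abs_mul, abs_of_pos h1]
  calc t ^ n * Real.exp (-(s * t)) * |g t| ≤ t ^ n * Real.exp (-(s * t)) * M :=
        mul_le_mul_of_nonneg_left (hM t ht) h1.le
    _ = M * (t ^ n * Real.exp (-(s * t))) := by ring


lemma aux_hasDerivAt (hg_cont : ContinuousOn g (Set.Ioi 0))
    (hM : ∀ t : ℝ, 0 < t → |g t| ≤ M) (n : ℕ) {s : ℝ} (hs : 0 < s) :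
    HasDerivAt (fun x : ℝ => ∫ t in Set.Ioi (0:ℝ), t ^ n * Real.exp (-(x * t)) * g t)
      (-∫ t in Set.Ioi (0:ℝ), t ^ (n + 1) * Real.exp (-(s * t)) * g t) s := by
  have key := hasDerivAt_integral_of_dominated_loc_of_deriv_le
    (μ := volume.restrict (Set.Ioi 0)) (x₀ := s)
    (F := fun x t => t ^ n * Real.exp (-(x * t)) * g t)
    (F' := fun x t => -(t ^ (n + 1) * Real.exp (-(x * t)) * g t))
    (bound := fun t => M * (t ^ (n + 1) * Real.exp (-(s / 2 * t))))
    (Metric.ball_mem_nhds s (half_pos hs))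
    (Filter.Eventually.of_forall (fun x => aux_meas_K hg_cont n x))
    (aux_int_K hg_cont hM n hs)
    ((aux_meas_K hg_cont (n + 1) s).neg)
    ?_ ((aux_int_pow_exp (n + 1) (half_pos hs)).const_mul M) ?_
  · have := key.2
    rwa [integral_neg] at this
  · rw [ae_restrict_iff' measurableSet_Ioi]
    filter_upwards with t ht
    intro x hx
    rw [Set.mem_Ioi] at ht
    rw [Metric.mem_ball, Real.dist_eq, abs_lt] at hx
    have hx2 : s / 2 ≤ x := by linarith
    have h1 : 0 < t ^ (n + 1) := by positivity
    rw [norm_neg, Real.norm_eq_abs, abs_mul, abs_mul, abs_of_pos h1,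
      abs_of_pos (Real.exp_pos _)]
    have h2 : Real.exp (-(x * t)) ≤ Real.exp (-(s / 2 * t)) := by
      apply Real.exp_le_exp.2; nlinarith
    calc t ^ (n+1) * Real.exp (-(x * t)) * |g t|
        ≤ t ^ (n+1) * Real.exp (-(s / 2 * t)) * M := by
          apply mul_le_mul (mul_le_mul_of_nonneg_left h2 h1.le) (hM t ht) (abs_nonneg _)
          positivity
      _ = M * (t ^ (n+1) * Real.exp (-(s / 2 * t))) := by ring
  · rw [ae_restrict_iff' measurableSet_Ioi]
    filter_upwards with t ht
    intro x hx
    have h1 : HasDerivAt (fun x : ℝ => -(x * t)) (-t) x := (hasDerivAt_mul_const t).neg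
    have h2 := ((h1.exp.const_mul (t ^ n)).mul_const (g t))
    exact h2.congr_deriv (by rw [pow_succ]; ring)

lemma aux_iteratedDeriv (hg_cont : ContinuousOn g (Set.Ioi 0))
    (hM : ∀ t : ℝ, 0 < t → |g t| ≤ M) {G : ℝ → ℝ}
    (hG : ∀ s : ℝ, 0 < s → G s = ∫ t in Set.Ioi (0:ℝ), Real.exp (-(s * t)) * g t)
    (n : ℕ) : ∀ s : ℝ, 0 < s →
      iteratedDeriv n G s = (-1) ^ n * ∫ t in Set.Ioi (0:ℝ), t ^ n * Real.exp (-(s * t)) * g t := by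
  induction n with
  | zero =>
    intro s hs
    simpa using hG s hs
  | succ n ih =>
    intro s hs
    rw [iteratedDeriv_succ]
    have hev : iteratedDeriv n G =ᶠ[nhds s]
        fun x => (-1) ^ n * ∫ t in Set.Ioi (0:ℝ), t ^ n * Real.exp (-(x * t)) * g t := by
      filter_upwards [isOpen_Ioi.mem_nhds (Set.mem_Ioi.2 hs)] with x hx
      exact ih x (Set.mem_Ioi.1 hx)
    rw [hev.deriv_eq]
    have hd := (aux_hasDerivAt hg_cont hM n hs).const_mul ((-1 : ℝ) ^ n)
    rw [hd.deriv]
    rw [pow_succ]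
    ring

lemma phi_mono_le {a b : ℝ} (ha : 0 ≤ a) (hab : a ≤ b) (hb : b ≤ 1) :
    a * Real.exp (-a) ≤ b * Real.exp (-b) := by
  have he := Real.add_one_le_exp (a - b)
  have hb0 : 0 ≤ b := ha.trans hab
  have key : a ≤ b * Real.exp (a - b) := by nlinarith
  have h2 : a * Real.exp (-a) ≤ b * Real.exp (a - b) * Real.exp (-a) := by
    nlinarith [Real.exp_pos (-a)]
  calc a * Real.exp (-a) ≤ b * Real.exp (a - b) * Real.exp (-a) := h2
    _ = b * Real.exp (-b) := by rw [mul_assoc, ← Real.exp_add, show a - b + -a = -b by ring]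

lemma phi_anti_le {a b : ℝ} (ha : 1 ≤ a) (hab : a ≤ b) :
    b * Real.exp (-b) ≤ a * Real.exp (-a) := by
  have he := Real.add_one_le_exp (b - a)
  have key : b ≤ a * Real.exp (b - a) := by nlinarith
  have h2 : b * Real.exp (-b) ≤ a * Real.exp (b - a) * Real.exp (-b) := by
    nlinarith [Real.exp_pos (-b)]
  calc b * Real.exp (-b) ≤ a * Real.exp (b - a) * Real.exp (-b) := h2
    _ = a * Real.exp (-a) := by rw [mul_assoc, ← Real.exp_add, show b - a + -b = -a by ring]

lemma phi_mono_lt {a b : ℝ} (ha : 0 ≤ a) (hab : a < b) (hb : b ≤ 1) :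
    a * Real.exp (-a) < b * Real.exp (-b) := by
  have he := Real.add_one_lt_exp (show a - b ≠ 0 by intro h; linarith)
  have hb0 : 0 < b := lt_of_le_of_lt ha hab
  have key : a < b * Real.exp (a - b) := by nlinarith
  have h2 : a * Real.exp (-a) < b * Real.exp (a - b) * Real.exp (-a) := by
    nlinarith [Real.exp_pos (-a)]
  calc a * Real.exp (-a) < b * Real.exp (a - b) * Real.exp (-a) := h2
    _ = b * Real.exp (-b) := by rw [mul_assoc, ← Real.exp_add, show a - b + -a = -b by ring]

lemma phi_anti_lt {a b : ℝ} (ha : 1 ≤ a) (hab : a < b) :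
    b * Real.exp (-b) < a * Real.exp (-a) := by
  have he := Real.add_one_lt_exp (show b - a ≠ 0 by intro h; linarith)
  have ha0 : 0 < a := lt_of_lt_of_le zero_lt_one ha
  have key : b < a * Real.exp (b - a) := by nlinarith
  have h2 : b * Real.exp (-b) < a * Real.exp (b - a) * Real.exp (-b) := by
    nlinarith [Real.exp_pos (-b)]
  calc b * Real.exp (-b) < a * Real.exp (b - a) * Real.exp (-b) := h2
    _ = a * Real.exp (-a) := by rw [mul_assoc, ← Real.exp_add, show b - a + -b = -a by ring]

lemma aux_pow_div_factorial_le (n : ℕ) : ((n : ℝ)) ^ n / n.factorial ≤ Real.exp n := by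
  have h := Real.sum_le_exp_of_nonneg (x := (n : ℝ)) (Nat.cast_nonneg n) (n + 1)
  refine le_trans ?_ h
  have := Finset.single_le_sum (f := fun i : ℕ => ((n : ℝ)) ^ i / i.factorial)
    (fun i _ => by positivity) (Finset.self_mem_range_succ n)
  simpa using this

lemma aux_tail_tendsto {q : ℝ} (hq0 : 0 < q) (hq : q < Real.exp (-1)) :
    Tendsto (fun n : ℕ => ((n : ℝ)) ^ (n + 1) / n.factorial * q ^ (n - 1)) atTop (nhds 0) := by
  have heq : 0 ≤ Real.exp 1 * q := by positivity
  have heq1 : Real.exp 1 * q < 1 := by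
    have := Real.exp_pos (1 : ℝ)
    have h2 : Real.exp (-1) = (Real.exp 1)⁻¹ := Real.exp_neg 1
    rw [h2] at hq
    calc Real.exp 1 * q < Real.exp 1 * (Real.exp 1)⁻¹ := by
          exact mul_lt_mul_of_pos_left hq this
      _ = 1 := mul_inv_cancel₀ (ne_of_gt this)
  have hten : Tendsto (fun n : ℕ => ((n : ℝ) * (Real.exp 1 * q) ^ n) * (1 / q)) atTop (nhds 0) := by
    have := (tendsto_self_mul_const_pow_of_lt_one heq heq1).mul_const (1 / q)
    simpa using this
  refine squeeze_zero (fun n => by positivity) (fun n => ?_) hten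
  have hfact : ((n : ℝ)) ^ n / n.factorial ≤ Real.exp 1 ^ n := by
    have := aux_pow_div_factorial_le n
    rwa [show Real.exp ((n:ℝ)) = Real.exp ((n:ℝ) * 1) by norm_num, Real.exp_nat_mul] at this
  have hq1 : q ^ (n - 1) = q ^ n / q ^ (n - (n - 1)) := by
    rw [eq_div_iff (by positivity), ← pow_add]
    congr 1
    omega
  have hfn : (0:ℝ) < n.factorial := by exact_mod_cast n.factorial_pos
  calc ((n : ℝ)) ^ (n + 1) / n.factorial * q ^ (n - 1)
      = (n : ℝ) * (((n : ℝ)) ^ n / n.factorial) * q ^ (n - 1) := by rw [pow_succ]; ring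
    _ ≤ (n : ℝ) * Real.exp 1 ^ n * q ^ (n - 1) := by
        have hn0 : (0:ℝ) ≤ n := Nat.cast_nonneg n
        have := mul_le_mul_of_nonneg_left hfact hn0
        exact mul_le_mul_of_nonneg_right this (by positivity)
    _ ≤ (n : ℝ) * Real.exp 1 ^ n * (q ^ n / q) := by
        rcases Nat.eq_zero_or_pos n with h | h
        · subst h; simp
        · have : n - (n - 1) = 1 := by omega
          rw [hq1, show n - (n - 1) = 1 by omega, pow_one]
    _ = ((n : ℝ) * (Real.exp 1 * q) ^ n) * (1 / q) := by rw [mul_pow]; ring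

section
variable {g : ℝ → ℝ} {M : ℝ}

set_option maxHeartbeats 1600000 in
lemma aux_main (hg_cont : ContinuousOn g (Set.Ioi 0))
    (hM : ∀ t : ℝ, 0 < t → |g t| ≤ M) {z : ℝ} (hz : 0 < z) :
    Tendsto (fun n : ℕ => ((n : ℝ) / z) ^ (n + 1) / n.factorial *
      ∫ t in Set.Ioi (0:ℝ), t ^ n * Real.exp (-(((n : ℝ) / z) * t)) * g t)
      atTop (nhds (g z)) := by
  have hM0 : 0 ≤ M := (abs_nonneg _).trans (hM z hz)
  rw [Metric.tendsto_nhds]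
  intro ε hε
  -- continuity at z
  obtain ⟨δ0, hδ0, hδ0spec⟩ := Metric.continuousWithinAt_iff.1 (hg_cont z hz) (ε / 2) (half_pos hε)
  obtain ⟨δ, hδdef⟩ : ∃ d : ℝ, d = min δ0 (z / 2) := ⟨_, rfl⟩
  have hδpos : 0 < δ := by rw [hδdef]; exact lt_min hδ0 (half_pos hz)
  have hδle : δ ≤ δ0 := by rw [hδdef]; exact min_le_left _ _
  have hδz : δ < z := by
    rw [hδdef]; exact lt_of_le_of_lt (min_le_right _ _) (by linarith)
  -- the kernel peak value q
  obtain ⟨φ, hφdef⟩ : ∃ f : ℝ → ℝ, f = fun t => t / z * Real.exp (-(t / z)) := ⟨_, rfl⟩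
  obtain ⟨q, hqdef⟩ : ∃ r : ℝ, r = max (φ (z - δ)) (φ (z + δ)) := ⟨_, rfl⟩
  have hq0 : 0 < q := by
    rw [hqdef]
    refine lt_max_of_lt_right ?_
    rw [hφdef]
    have h1 : 0 < (z + δ) / z := by positivity
    exact mul_pos h1 (Real.exp_pos _)
  have hql : φ (z - δ) < Real.exp (-1) := by
    rw [hφdef]
    have h := phi_mono_lt (a := (z - δ) / z) (b := 1)
      (div_nonneg (by linarith) hz.le) (by rw [div_lt_one hz]; linarith) le_rfl
    simpa [hφdef] using h
  have hqr : φ (z + δ) < Real.exp (-1) := by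
    rw [hφdef]
    have h := phi_anti_lt (a := 1) (b := (z + δ) / z)
      le_rfl (by rw [lt_div_iff₀ hz]; linarith)
    simpa using h
  have hq1 : q < Real.exp (-1) := by rw [hqdef]; exact max_lt hql hqr
  -- φ bounded by q off the window
  have hphiq : ∀ t ∈ Set.Ioi (0:ℝ) \ Set.Ioo (z - δ) (z + δ), φ t ≤ q := by
    rintro t ⟨ht0, htn⟩
    rw [Set.mem_Ioi] at ht0
    rw [Set.mem_Ioo, not_and_or, not_lt, not_lt] at htn
    rw [hqdef, hφdef]
    rcases htn with h | h
    · refine le_trans ?_ (le_max_left _ _)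
      exact phi_mono_le (div_nonneg ht0.le hz.le) (by gcongr)
        (by rw [div_le_one hz]; linarith)
    · refine le_trans ?_ (le_max_right _ _)
      exact phi_anti_le (by rw [le_div_iff₀ hz]; linarith) (by gcongr)
  -- tail smallness
  have htail := (aux_tail_tendsto hq0 hq1).eventually_lt_const
    (show (0:ℝ) < ε / (2 * (2 * M + 1)) by positivity)
  filter_upwards [eventually_ge_atTop 1, htail] with n hn htn
  -- setup
  have hnpos : (0:ℝ) < n := by exact_mod_cast hn
  set s : ℝ := (n : ℝ) / z with hsdef
  have hs : 0 < s := by positivity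
  set c : ℝ := s ^ (n + 1) / n.factorial with hcdef
  have hc0 : 0 ≤ c := by positivity
  have hfacpos : (0:ℝ) < n.factorial := by exact_mod_cast n.factorial_pos
  have hmass : c * ∫ t in Set.Ioi (0:ℝ), t ^ n * Real.exp (-(s * t)) = 1 := by
    rw [aux_integral_pow_exp n hs, hcdef]
    field_simp
  -- g' and integrability
  set g' : ℝ → ℝ := fun t => g t - g z with hg'def
  have hg'c : ContinuousOn g' (Set.Ioi 0) := hg_cont.sub continuousOn_const
  have hM' : ∀ t : ℝ, 0 < t → |g' t| ≤ M + |g z| := fun t ht =>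
    (abs_sub _ _).trans (add_le_add_left (hM t ht) _)
  have I1 := aux_int_K hg_cont hM n hs
  have I2 := aux_int_K hg'c hM' n hs
  have I3 := aux_int_pow_exp n hs
  -- step 1: subtract the mass
  have hstep1 : c * (∫ t in Set.Ioi (0:ℝ), t ^ n * Real.exp (-(s * t)) * g t) - g z
      = c * ∫ t in Set.Ioi (0:ℝ), t ^ n * Real.exp (-(s * t)) * g' t := by
    have h1 : ∫ t in Set.Ioi (0:ℝ), t ^ n * Real.exp (-(s * t)) * g' t
        = (∫ t in Set.Ioi (0:ℝ), t ^ n * Real.exp (-(s * t)) * g t)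
          - g z * ∫ t in Set.Ioi (0:ℝ), t ^ n * Real.exp (-(s * t)) := by
      rw [show (fun t : ℝ => t ^ n * Real.exp (-(s * t)) * g' t)
          = fun t : ℝ => t ^ n * Real.exp (-(s * t)) * g t
            - g z * (t ^ n * Real.exp (-(s * t))) from funext fun t => by
        simp only [hg'def]; ring]
      rw [integral_sub I1 (I3.const_mul (g z)), integral_const_mul]
    rw [h1, mul_sub]
    have : c * (g z * ∫ t in Set.Ioi (0:ℝ), t ^ n * Real.exp (-(s * t))) = g z := by
      rw [show c * (g z * ∫ t in Set.Ioi (0:ℝ), t ^ n * Real.exp (-(s * t)))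
        = g z * (c * ∫ t in Set.Ioi (0:ℝ), t ^ n * Real.exp (-(s * t))) by ring, hmass, mul_one]
    rw [this]
  rw [Real.dist_eq, hstep1]
  -- notation
  obtain ⟨S, hSdef⟩ : ∃ u : Set ℝ, u = Set.Ioi (0:ℝ) \ Set.Ioo (z - δ) (z + δ) := ⟨_, rfl⟩
  have hSsub : S ⊆ Set.Ioi (0:ℝ) := by rw [hSdef]; exact Set.diff_subset
  have hSmeas : MeasurableSet S := by rw [hSdef]; exact measurableSet_Ioi.diff measurableSet_Ioo
  have hIoosub : Set.Ioo (z - δ) (z + δ) ⊆ Set.Ioi (0:ℝ) := fun t ht => by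
    rw [Set.mem_Ioi]
    have h1 := ht.1
    linarith
  have hunion : Set.Ioo (z - δ) (z + δ) ∪ S = Set.Ioi (0:ℝ) := by
    rw [hSdef]; exact Set.union_diff_cancel hIoosub
  have hdisj : Disjoint (Set.Ioo (z - δ) (z + δ)) S := by
    rw [hSdef]; exact disjoint_sdiff_self_right
  have I2abs : IntegrableOn (fun t : ℝ => |t ^ n * Real.exp (-(s * t)) * g' t|) (Set.Ioi 0) :=
    I2.abs
  have habs : |c * ∫ t in Set.Ioi (0:ℝ), t ^ n * Real.exp (-(s * t)) * g' t|
      ≤ c * ∫ t in Set.Ioi (0:ℝ), |t ^ n * Real.exp (-(s * t)) * g' t| := by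
    rw [abs_mul, abs_of_nonneg hc0]
    refine mul_le_mul_of_nonneg_left ?_ hc0
    have h := norm_integral_le_integral_norm (μ := volume.restrict (Set.Ioi 0))
      (fun t : ℝ => t ^ n * Real.exp (-(s * t)) * g' t)
    simpa only [Real.norm_eq_abs] using h
  have hsplit : (∫ t in Set.Ioi (0:ℝ), |t ^ n * Real.exp (-(s * t)) * g' t|)
      = (∫ t in Set.Ioo (z - δ) (z + δ), |t ^ n * Real.exp (-(s * t)) * g' t|)
        + ∫ t in S, |t ^ n * Real.exp (-(s * t)) * g' t| := by
    rw [← hunion, setIntegral_union hdisj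
      hSmeas (I2abs.mono_set hIoosub) (I2abs.mono_set hSsub)]
  -- near bound
  have hnear : (∫ t in Set.Ioo (z - δ) (z + δ), |t ^ n * Real.exp (-(s * t)) * g' t|)
      ≤ ε / 2 * ∫ t in Set.Ioi (0:ℝ), t ^ n * Real.exp (-(s * t)) := by
    calc (∫ t in Set.Ioo (z - δ) (z + δ), |t ^ n * Real.exp (-(s * t)) * g' t|)
        ≤ ∫ t in Set.Ioo (z - δ) (z + δ), ε / 2 * (t ^ n * Real.exp (-(s * t))) := by
          refine setIntegral_mono_on (I2abs.mono_set hIoosub)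
            ((I3.mono_set hIoosub).const_mul _) measurableSet_Ioo (fun t ht => ?_)
          have ht0 : 0 < t := hIoosub ht
          have hdist : dist t z < δ0 := by
            rw [Real.dist_eq, abs_lt]
            have h1 := ht.1
            have h2 := ht.2
            constructor <;> linarith
          have hg'small : |g' t| < ε / 2 := by
            have := hδ0spec (Set.mem_Ioi.2 ht0) hdist
            rwa [Real.dist_eq] at this
          have hpos : 0 < t ^ n * Real.exp (-(s * t)) := by positivity
          rw [abs_mul, abs_of_pos hpos]
          calc t ^ n * Real.exp (-(s * t)) * |g' t|
              ≤ t ^ n * Real.exp (-(s * t)) * (ε / 2) :=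
                mul_le_mul_of_nonneg_left hg'small.le hpos.le
            _ = ε / 2 * (t ^ n * Real.exp (-(s * t))) := by ring
      _ ≤ ∫ t in Set.Ioi (0:ℝ), ε / 2 * (t ^ n * Real.exp (-(s * t))) := by
          refine setIntegral_mono_set (I3.const_mul _) ?_ hIoosub.eventuallyLE
          filter_upwards [self_mem_ae_restrict measurableSet_Ioi] with t ht
          rw [Set.mem_Ioi] at ht
          have : (0:ℝ) < ε / 2 * (t ^ n * Real.exp (-(s * t))) := by positivity
          exact this.le
      _ = ε / 2 * ∫ t in Set.Ioi (0:ℝ), t ^ n * Real.exp (-(s * t)) := integral_const_mul _ _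
  -- far bound
  obtain ⟨C, hCdef⟩ : ∃ r : ℝ, r = 2 * M * (z ^ n * q ^ (n - 1)) := ⟨_, rfl⟩
  have hC0 : 0 ≤ C := by rw [hCdef]; positivity
  have hφnonneg : ∀ t : ℝ, 0 < t → 0 ≤ φ t := fun t ht => by
    rw [hφdef]
    exact mul_nonneg (div_nonneg ht.le hz.le) (Real.exp_pos _).le
  have hkernel : ∀ t ∈ S, |t ^ n * Real.exp (-(s * t)) * g' t| ≤ C * φ t := by
    intro t ht
    rw [hSdef] at ht
    have ht0 : 0 < t := Set.mem_Ioi.1 ht.1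
    have hφq := hphiq t ht
    have h1 : t ^ n * Real.exp (-(s * t)) = z ^ n * φ t ^ n := by
      simp only [hφdef]
      rw [mul_pow, div_pow, ← Real.exp_nat_mul, hsdef]
      rw [show (n : ℝ) * -(t / z) = -((n : ℝ) / z * t) by ring]
      field_simp
    have h2 : φ t ^ n ≤ q ^ (n - 1) * φ t := by
      have hsucc : φ t ^ n = φ t ^ (n - 1) * φ t := by
        rw [← pow_succ]
        congr 1
        omega
      rw [hsucc]
      exact mul_le_mul_of_nonneg_right
        (pow_le_pow_left₀ (hφnonneg t ht0) hφq _) (hφnonneg t ht0)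
    have h3 : |g' t| ≤ 2 * M := by
      have := hM' t ht0
      have hgz := hM z hz
      linarith
    have hpos : 0 < t ^ n * Real.exp (-(s * t)) := by positivity
    rw [abs_mul, abs_of_pos hpos]
    calc t ^ n * Real.exp (-(s * t)) * |g' t|
        ≤ t ^ n * Real.exp (-(s * t)) * (2 * M) :=
          mul_le_mul_of_nonneg_left h3 hpos.le
      _ = 2 * M * (z ^ n * φ t ^ n) := by rw [h1]; ring
      _ ≤ 2 * M * (z ^ n * (q ^ (n - 1) * φ t)) := by
          have hz0 : (0:ℝ) ≤ z ^ n := by positivity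
          exact mul_le_mul_of_nonneg_left (mul_le_mul_of_nonneg_left h2 hz0)
            (by positivity : (0:ℝ) ≤ 2 * M)
      _ = C * φ t := by rw [hCdef]; ring
  have hIphi : IntegrableOn φ (Set.Ioi 0) := by
    have h : IntegrableOn (fun t : ℝ => 1 / z * (t ^ 1 * Real.exp (-(1 / z * t)))) (Set.Ioi 0) :=
      (aux_int_pow_exp 1 (show (0:ℝ) < 1 / z by positivity)).const_mul (1 / z)
    refine h.congr_fun (fun x hx => ?_) measurableSet_Ioi
    simp only [hφdef, pow_one]
    rw [show -(1 / z * x) = -(x / z) by ring]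
    ring
  have hIphi_val : (∫ t in Set.Ioi (0:ℝ), φ t) = z := by
    have heq : ∀ t ∈ Set.Ioi (0:ℝ), φ t = 1 / z * (t ^ 1 * Real.exp (-(1 / z * t))) := by
      intro t ht
      simp only [hφdef, pow_one]
      rw [show -(1 / z * t) = -(t / z) by ring]
      ring
    rw [setIntegral_congr_fun measurableSet_Ioi heq, integral_const_mul,
      aux_integral_pow_exp 1 (show (0:ℝ) < 1 / z by positivity)]
    have h2 : ((1:ℝ)/z) ^ (1 + 1) = 1 / z ^ 2 := by rw [div_pow, one_pow]
    rw [h2, Nat.factorial_one, Nat.cast_one]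
    rw [one_div_one_div]
    field_simp
  have hICphi : IntegrableOn (fun t : ℝ => C * φ t) (Set.Ioi 0) := hIphi.const_mul C
  have hfar : (∫ t in S, |t ^ n * Real.exp (-(s * t)) * g' t|) ≤ C * z := by
    calc (∫ t in S, |t ^ n * Real.exp (-(s * t)) * g' t|)
        ≤ ∫ t in S, C * φ t :=
          setIntegral_mono_on (I2abs.mono_set hSsub) (hICphi.mono_set hSsub) hSmeas hkernel
      _ ≤ ∫ t in Set.Ioi (0:ℝ), C * φ t := by
          refine setIntegral_mono_set hICphi ?_ hSsub.eventuallyLE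
          filter_upwards [self_mem_ae_restrict measurableSet_Ioi] with t ht
          exact mul_nonneg hC0 (hφnonneg t (Set.mem_Ioi.1 ht))
      _ = C * z := by rw [integral_const_mul, hIphi_val]
  -- combine
  set I : ℝ := ∫ t in Set.Ioi (0:ℝ), t ^ n * Real.exp (-(s * t)) with hIdef
  set A : ℝ := ∫ t in Set.Ioo (z - δ) (z + δ), |t ^ n * Real.exp (-(s * t)) * g' t| with hAdef
  set B : ℝ := ∫ t in S, |t ^ n * Real.exp (-(s * t)) * g' t| with hBdef
  have hA : c * A ≤ ε / 2 := by
    calc c * A ≤ c * (ε / 2 * I) := mul_le_mul_of_nonneg_left hnear hc0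
      _ = ε / 2 * (c * I) := by ring
      _ = ε / 2 := by rw [hmass, mul_one]
  have hTn0 : (0:ℝ) ≤ ((n : ℝ)) ^ (n + 1) / n.factorial * q ^ (n - 1) := by positivity
  have hkey : c * (C * z) = 2 * M * (((n : ℝ)) ^ (n + 1) / n.factorial * q ^ (n - 1)) := by
    rw [hcdef, hCdef, hsdef, div_pow]
    have hzn : (0:ℝ) < z ^ (n + 1) := by positivity
    field_simp
    ring
  have hB : c * B < ε / 2 := by
    calc c * B ≤ c * (C * z) := mul_le_mul_of_nonneg_left hfar hc0
      _ = 2 * M * (((n : ℝ)) ^ (n + 1) / n.factorial * q ^ (n - 1)) := hkey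
      _ ≤ (2 * M + 1) * (((n : ℝ)) ^ (n + 1) / n.factorial * q ^ (n - 1)) := by nlinarith
      _ < (2 * M + 1) * (ε / (2 * (2 * M + 1))) :=
          mul_lt_mul_of_pos_left htn (by positivity)
      _ = ε / 2 := by field_simp
  calc |c * ∫ t in Set.Ioi (0:ℝ), t ^ n * Real.exp (-(s * t)) * g' t|
      ≤ c * ∫ t in Set.Ioi (0:ℝ), |t ^ n * Real.exp (-(s * t)) * g' t| := habs
    _ = c * A + c * B := by rw [hsplit]; ring
    _ < ε := by linarith

end


theorem post_laplace_inversion (g : ℝ → ℝ)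
    (hg_cont : ContinuousOn g (Set.Ioi 0))
    (hg_bdd : ∃ M : ℝ, ∀ t : ℝ, 0 < t → |g t| ≤ M)
    (G : ℝ → ℝ)
    (hG : ∀ s : ℝ, 0 < s → G s = ∫ t in Set.Ioi (0 : ℝ), Real.exp (-(s * t)) * g t)
    (z : ℝ) (hz : 0 < z) :
    Tendsto
      (fun n : ℕ =>
        ((-1 : ℝ) ^ n / n.factorial) * ((n : ℝ) / z) ^ (n + 1) *
          iteratedDeriv n G ((n : ℝ) / z))
      atTop (nhds (g z)) := by
  obtain ⟨M, hM⟩ := hg_bdd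
  refine (aux_main hg_cont hM hz).congr' ?_
  filter_upwards [eventually_ge_atTop 1] with n hn
  have hnpos : (0:ℝ) < (n : ℝ) := by exact_mod_cast hn
  have hnz : 0 < (n : ℝ) / z := by positivity
  rw [aux_iteratedDeriv hg_cont hM hG n ((n : ℝ) / z) hnz]
  rw [show ((-1 : ℝ) ^ n / n.factorial) * (((n : ℝ)) / z) ^ (n + 1) *
      ((-1 : ℝ) ^ n * ∫ t in Set.Ioi (0:ℝ), t ^ n * Real.exp (-(((n : ℝ) / z) * t)) * g t)
    = ((-1 : ℝ) ^ n * (-1 : ℝ) ^ n) * ((((n : ℝ)) / z) ^ (n + 1) / n.factorial *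
      ∫ t in Set.Ioi (0:ℝ), t ^ n * Real.exp (-(((n : ℝ) / z) * t)) * g t) by ring,
    ← pow_add, Even.neg_one_pow (Even.add_self n), one_mul]
end
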